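/- Let G be a commutative group, let r ≥ 1, and let (σ₁, σ₁'), …, (σ_r, σ_r') be pairs of elements of G with σᵢ² = 1 and (σᵢ')² = 1 for all i. In A ⊗ A, where A = ℂ[G], set 𝒯 := ∏_{i=1}^{r} x_{σᵢ,σᵢ'} and 𝒥 := (1/2^r) · 𝒯. Then: (i) (Δ ⊗ id)(𝒥) · (𝒥 ⊗ 1) = (id ⊗ Δ)(𝒥) · (1 ⊗ 𝒥) in A ⊗ A ⊗ A; (ii) (ε ⊗ id)(𝒥) = 1 and (id ⊗ ε)(𝒥) = 1 in A; (iii) 𝒥 · 𝒥 = 1 ⊗ 1, so 𝒥 is invertible with 𝒥⁻¹ = 𝒥. -/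

import Mathlib

open scoped TensorProduct

noncomputable section

variable (G : Type*) [CommGroup G]

/-- The comultiplication of the group Hopf algebra `ℂ[G]`, determined by `Δ(g) = g ⊗ g`. -/
def Delta : MonoidAlgebra ℂ G →ₐ[ℂ] MonoidAlgebra ℂ G ⊗[ℂ] MonoidAlgebra ℂ G :=
  MonoidAlgebra.lift ℂ _ G
    { toFun := fun g => MonoidAlgebra.of ℂ G g ⊗ₜ[ℂ] MonoidAlgebra.of ℂ G g
      map_one' := by simp [Algebra.TensorProduct.one_def, MonoidAlgebra.one_def]
      map_mul' := fun g h => by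
        simp [Algebra.TensorProduct.tmul_mul_tmul, map_mul] }

/-- The counit of the group Hopf algebra `ℂ[G]`, determined by `ε(g) = 1`. -/
def counitCG : MonoidAlgebra ℂ G →ₐ[ℂ] ℂ :=
  MonoidAlgebra.lift ℂ ℂ G 1

/-- The element `x_{σ,σ'} = (1+σ) ⊗ 1 + (1−σ) ⊗ σ'` of `ℂ[G] ⊗ ℂ[G]`. -/
def xEl (σ σ' : G) : MonoidAlgebra ℂ G ⊗[ℂ] MonoidAlgebra ℂ G :=
  (1 + MonoidAlgebra.of ℂ G σ) ⊗ₜ[ℂ] 1 +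
    (1 - MonoidAlgebra.of ℂ G σ) ⊗ₜ[ℂ] MonoidAlgebra.of ℂ G σ'

local notation "𝔸" => MonoidAlgebra ℂ G

lemma Delta_of (g : G) : Delta G (MonoidAlgebra.of ℂ G g)
    = MonoidAlgebra.of ℂ G g ⊗ₜ[ℂ] MonoidAlgebra.of ℂ G g := by
  simp [Delta]

lemma counit_of (g : G) : counitCG G (MonoidAlgebra.of ℂ G g) = 1 := by
  simp [counitCG]

lemma of_mul_self {g : G} (h : g ^ 2 = 1) :
    MonoidAlgebra.of ℂ G g * MonoidAlgebra.of ℂ G g = 1 := by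
  rw [← map_mul, ← pow_two, h, map_one]

lemma xEl_eq (s s' : G) :
    xEl G s s' = 1 + (MonoidAlgebra.of ℂ G s ⊗ₜ[ℂ] (1 : 𝔸))
      + ((1 : 𝔸) ⊗ₜ[ℂ] MonoidAlgebra.of ℂ G s')
      - (MonoidAlgebra.of ℂ G s ⊗ₜ[ℂ] (1 : 𝔸)) * ((1 : 𝔸) ⊗ₜ[ℂ] MonoidAlgebra.of ℂ G s') := by
  simp only [xEl, TensorProduct.add_tmul, TensorProduct.sub_tmul, Algebra.TensorProduct.tmul_mul_tmul, one_mul, mul_one,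
    Algebra.TensorProduct.one_def]
  abel

lemma key_cocycle {R : Type*} [CommRing R] (a b c d : R)
    (ha : a * a = 1) (hd : d * d = 1) :
    (1 + a * b + d - a * b * d) * (1 + a + c - a * c)
      = (1 + a + c * d - a * (c * d)) * (1 + b + d - b * d) := by
  linear_combination (b - b*c - b*d + b*c*d) * ha + (-c + b*c + a*c - a*b*c) * hd

lemma key_sq {R : Type*} [CommRing R] (a d : R)
    (ha : a * a = 1) (hd : d * d = 1) :
    (1 + a + d - a * d) * (1 + a + d - a * d) = 4 := by
  linear_combination (1 - 2*d + d*d) * ha + (2 - 2*a) * hd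

variable {G}

set_option maxHeartbeats 1000000 in
lemma cocycle_factor {s s' : G} (hs : s ^ 2 = 1) (hs' : s' ^ 2 = 1) :
    (Algebra.TensorProduct.assoc ℂ ℂ ℂ 𝔸 𝔸 𝔸)
        ((Algebra.TensorProduct.map (Delta G) (AlgHom.id ℂ 𝔸)) (xEl G s s')) *
      (Algebra.TensorProduct.assoc ℂ ℂ ℂ 𝔸 𝔸 𝔸) (xEl G s s' ⊗ₜ[ℂ] (1 : 𝔸)) =
    (Algebra.TensorProduct.map (AlgHom.id ℂ 𝔸) (Delta G)) (xEl G s s') *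
      ((1 : 𝔸) ⊗ₜ[ℂ] xEl G s s') := by
  have haa := of_mul_self (G := G) hs
  have hbb := of_mul_self (G := G) hs'
  have hα : (MonoidAlgebra.of ℂ G s ⊗ₜ[ℂ] ((1:𝔸) ⊗ₜ[ℂ] (1:𝔸))) *
      (MonoidAlgebra.of ℂ G s ⊗ₜ[ℂ] ((1:𝔸) ⊗ₜ[ℂ] (1:𝔸))) = 1 := by
    simp only [Algebra.TensorProduct.tmul_mul_tmul, one_mul, haa]
    simp [Algebra.TensorProduct.one_def]
  have hδ : ((1:𝔸) ⊗ₜ[ℂ] ((1:𝔸) ⊗ₜ[ℂ] MonoidAlgebra.of ℂ G s')) *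
      ((1:𝔸) ⊗ₜ[ℂ] ((1:𝔸) ⊗ₜ[ℂ] MonoidAlgebra.of ℂ G s')) = 1 := by
    simp only [Algebra.TensorProduct.tmul_mul_tmul, one_mul, hbb]
    simp [Algebra.TensorProduct.one_def]
  have h1 : (Algebra.TensorProduct.assoc ℂ ℂ ℂ 𝔸 𝔸 𝔸)
      ((Algebra.TensorProduct.map (Delta G) (AlgHom.id ℂ 𝔸)) (xEl G s s'))
      = 1 + (MonoidAlgebra.of ℂ G s ⊗ₜ[ℂ] ((1:𝔸) ⊗ₜ[ℂ] (1:𝔸)))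
          * ((1:𝔸) ⊗ₜ[ℂ] (MonoidAlgebra.of ℂ G s ⊗ₜ[ℂ] (1:𝔸)))
        + ((1:𝔸) ⊗ₜ[ℂ] ((1:𝔸) ⊗ₜ[ℂ] MonoidAlgebra.of ℂ G s'))
        - (MonoidAlgebra.of ℂ G s ⊗ₜ[ℂ] ((1:𝔸) ⊗ₜ[ℂ] (1:𝔸)))
          * ((1:𝔸) ⊗ₜ[ℂ] (MonoidAlgebra.of ℂ G s ⊗ₜ[ℂ] (1:𝔸)))
          * ((1:𝔸) ⊗ₜ[ℂ] ((1:𝔸) ⊗ₜ[ℂ] MonoidAlgebra.of ℂ G s')) := by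
    rw [xEl_eq]
    simp only [map_add, map_sub, map_mul, map_one, Algebra.TensorProduct.map_tmul,
      AlgHom.coe_id, id_eq, Delta_of, Algebra.TensorProduct.assoc_tmul,
      Algebra.TensorProduct.tmul_mul_tmul, one_mul, mul_one,
      Algebra.TensorProduct.one_def]
  have h2 : (Algebra.TensorProduct.assoc ℂ ℂ ℂ 𝔸 𝔸 𝔸) (xEl G s s' ⊗ₜ[ℂ] (1 : 𝔸))
      = 1 + (MonoidAlgebra.of ℂ G s ⊗ₜ[ℂ] ((1:𝔸) ⊗ₜ[ℂ] (1:𝔸)))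
        + ((1:𝔸) ⊗ₜ[ℂ] (MonoidAlgebra.of ℂ G s' ⊗ₜ[ℂ] (1:𝔸)))
        - (MonoidAlgebra.of ℂ G s ⊗ₜ[ℂ] ((1:𝔸) ⊗ₜ[ℂ] (1:𝔸)))
          * ((1:𝔸) ⊗ₜ[ℂ] (MonoidAlgebra.of ℂ G s' ⊗ₜ[ℂ] (1:𝔸))) := by
    rw [xEl_eq]
    simp only [Algebra.TensorProduct.tmul_mul_tmul, TensorProduct.add_tmul,
      TensorProduct.sub_tmul, map_add, map_sub, Algebra.TensorProduct.assoc_tmul,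
      one_mul, mul_one, Algebra.TensorProduct.one_def]
  have h3 : (Algebra.TensorProduct.map (AlgHom.id ℂ 𝔸) (Delta G)) (xEl G s s')
      = 1 + (MonoidAlgebra.of ℂ G s ⊗ₜ[ℂ] ((1:𝔸) ⊗ₜ[ℂ] (1:𝔸)))
        + ((1:𝔸) ⊗ₜ[ℂ] (MonoidAlgebra.of ℂ G s' ⊗ₜ[ℂ] (1:𝔸)))
          * ((1:𝔸) ⊗ₜ[ℂ] ((1:𝔸) ⊗ₜ[ℂ] MonoidAlgebra.of ℂ G s'))
        - (MonoidAlgebra.of ℂ G s ⊗ₜ[ℂ] ((1:𝔸) ⊗ₜ[ℂ] (1:𝔸)))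
          * (((1:𝔸) ⊗ₜ[ℂ] (MonoidAlgebra.of ℂ G s' ⊗ₜ[ℂ] (1:𝔸)))
            * ((1:𝔸) ⊗ₜ[ℂ] ((1:𝔸) ⊗ₜ[ℂ] MonoidAlgebra.of ℂ G s'))) := by
    rw [xEl_eq]
    simp only [map_add, map_sub, map_mul, map_one, Algebra.TensorProduct.map_tmul,
      AlgHom.coe_id, id_eq, Delta_of, Algebra.TensorProduct.tmul_mul_tmul, one_mul,
      mul_one, Algebra.TensorProduct.one_def]
  have h4 : ((1:𝔸) ⊗ₜ[ℂ] xEl G s s')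
      = 1 + ((1:𝔸) ⊗ₜ[ℂ] (MonoidAlgebra.of ℂ G s ⊗ₜ[ℂ] (1:𝔸)))
        + ((1:𝔸) ⊗ₜ[ℂ] ((1:𝔸) ⊗ₜ[ℂ] MonoidAlgebra.of ℂ G s'))
        - ((1:𝔸) ⊗ₜ[ℂ] (MonoidAlgebra.of ℂ G s ⊗ₜ[ℂ] (1:𝔸)))
          * ((1:𝔸) ⊗ₜ[ℂ] ((1:𝔸) ⊗ₜ[ℂ] MonoidAlgebra.of ℂ G s')) := by
    rw [xEl_eq]
    simp only [Algebra.TensorProduct.tmul_mul_tmul, TensorProduct.tmul_add,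
      TensorProduct.tmul_sub, one_mul, mul_one, Algebra.TensorProduct.one_def]
  rw [h1, h2, h3, h4]
  exact key_cocycle (R := MonoidAlgebra ℂ G ⊗[ℂ] (MonoidAlgebra ℂ G ⊗[ℂ] MonoidAlgebra ℂ G)) _ _ _ _ hα hδ

lemma xEl_sq {s s' : G} (hs : s ^ 2 = 1) (hs' : s' ^ 2 = 1) :
    xEl G s s' * xEl G s s' = 4 := by
  have haa := of_mul_self (G := G) hs
  have hbb := of_mul_self (G := G) hs'
  have hα : (MonoidAlgebra.of ℂ G s ⊗ₜ[ℂ] (1:𝔸)) * (MonoidAlgebra.of ℂ G s ⊗ₜ[ℂ] (1:𝔸))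
      = 1 := by
    simp only [Algebra.TensorProduct.tmul_mul_tmul, one_mul, haa]
    simp [Algebra.TensorProduct.one_def]
  have hδ : ((1:𝔸) ⊗ₜ[ℂ] MonoidAlgebra.of ℂ G s') * ((1:𝔸) ⊗ₜ[ℂ] MonoidAlgebra.of ℂ G s')
      = 1 := by
    simp only [Algebra.TensorProduct.tmul_mul_tmul, one_mul, hbb]
    simp [Algebra.TensorProduct.one_def]
  rw [xEl_eq]
  exact key_sq (R := MonoidAlgebra ℂ G ⊗[ℂ] MonoidAlgebra ℂ G) _ _ hα hδ

lemma counit_left_x (s s' : G) :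
    (Algebra.TensorProduct.lid ℂ 𝔸)
      ((Algebra.TensorProduct.map (counitCG G) (AlgHom.id ℂ 𝔸)) (xEl G s s')) = 2 := by
  simp only [xEl, map_add, Algebra.TensorProduct.map_tmul, AlgHom.coe_id, id_eq,
    map_sub, map_one, counit_of, Algebra.TensorProduct.lid_tmul, TensorProduct.lid_tmul]
  norm_num
  rw [two_smul ℂ (1 : 𝔸), one_add_one_eq_two]

lemma counit_right_x (s s' : G) :
    (Algebra.TensorProduct.rid ℂ ℂ 𝔸)
      ((Algebra.TensorProduct.map (AlgHom.id ℂ 𝔸) (counitCG G)) (xEl G s s')) = 2 := by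
  simp only [xEl, map_add, Algebra.TensorProduct.map_tmul, AlgHom.coe_id, id_eq,
    map_sub, map_one, counit_of, Algebra.TensorProduct.rid_tmul]
  simp only [one_smul, neg_smul, neg_one_smul]
  ring

variable (G)

/-- The Drinfeld twist `𝒥 = 2^{-r} ∏_{i=1}^r x_{σᵢ,σᵢ'}` satisfies the cocycle identity,
the counit conditions, and `𝒥·𝒥 = 1⊗1` (so `𝒥` is its own inverse). -/
theorem twist_J (r : ℕ) (hr : 1 ≤ r) (σ σ' : Fin r → G)
    (hσ : ∀ i, σ i ^ 2 = 1) (hσ' : ∀ i, σ' i ^ 2 = 1) :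
    ∀ 𝒥 : MonoidAlgebra ℂ G ⊗[ℂ] MonoidAlgebra ℂ G,
      𝒥 = ((2 : ℂ) ^ r)⁻¹ • (∏ i : Fin r, xEl G (σ i) (σ' i)) →
      (Algebra.TensorProduct.assoc ℂ ℂ ℂ (MonoidAlgebra ℂ G) (MonoidAlgebra ℂ G)
            (MonoidAlgebra ℂ G)
          ((Algebra.TensorProduct.map (Delta G) (AlgHom.id ℂ (MonoidAlgebra ℂ G))) 𝒥 *
            (𝒥 ⊗ₜ[ℂ] (1 : MonoidAlgebra ℂ G))) =
        (Algebra.TensorProduct.map (AlgHom.id ℂ (MonoidAlgebra ℂ G)) (Delta G)) 𝒥 *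
          ((1 : MonoidAlgebra ℂ G) ⊗ₜ[ℂ] 𝒥)) ∧
      (Algebra.TensorProduct.lid ℂ (MonoidAlgebra ℂ G)
          ((Algebra.TensorProduct.map (counitCG G) (AlgHom.id ℂ (MonoidAlgebra ℂ G))) 𝒥) = 1) ∧
      (Algebra.TensorProduct.rid ℂ ℂ (MonoidAlgebra ℂ G)
          ((Algebra.TensorProduct.map (AlgHom.id ℂ (MonoidAlgebra ℂ G)) (counitCG G)) 𝒥) = 1) ∧
      𝒥 * 𝒥 = (1 : MonoidAlgebra ℂ G) ⊗ₜ[ℂ] (1 : MonoidAlgebra ℂ G) := by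
  intro J hJ
  have h2r : ((2:ℂ) ^ r) ≠ 0 := pow_ne_zero r two_ne_zero
  have hcL : ((2:ℂ) ^ r)⁻¹ * (2:ℂ) ^ r = 1 := inv_mul_cancel₀ h2r
  have hscal : ((2:ℂ) ^ r)⁻¹ * ((2:ℂ) ^ r)⁻¹ * (4:ℂ) ^ r = 1 := by
    rw [show (4:ℂ) = 2 * 2 by norm_num, mul_pow]
    field_simp
  subst hJ
  refine ⟨?_, ?_, ?_, ?_⟩
  · rw [← TensorProduct.smul_tmul', TensorProduct.tmul_smul]
    simp only [map_smul, map_mul]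
    rw [smul_mul_assoc, mul_smul_comm, smul_smul, smul_mul_assoc, mul_smul_comm, smul_smul]
    congr 1
    rw [← Algebra.TensorProduct.includeLeft_apply (R := ℂ) (S := ℂ),
      ← Algebra.TensorProduct.includeRight_apply]
    simp only [map_prod]
    rw [← Finset.prod_mul_distrib, ← Finset.prod_mul_distrib]
    refine Finset.prod_congr rfl fun i _ => ?_
    rw [Algebra.TensorProduct.includeLeft_apply, Algebra.TensorProduct.includeRight_apply]
    exact cocycle_factor (hσ i) (hσ' i)
  · simp only [map_smul, map_prod, counit_left_x]
    rw [Finset.prod_const, Finset.card_univ, Fintype.card_fin]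
    have h2 : ((2 : 𝔸)) ^ r = algebraMap ℂ 𝔸 ((2:ℂ) ^ r) := by rw [map_pow, map_ofNat]
    rw [h2, Algebra.smul_def, ← map_mul, hcL, map_one]
  · simp only [map_smul, map_prod, counit_right_x]
    rw [Finset.prod_const, Finset.card_univ, Fintype.card_fin]
    have h2 : ((2 : 𝔸)) ^ r = algebraMap ℂ 𝔸 ((2:ℂ) ^ r) := by rw [map_pow, map_ofNat]
    rw [h2, Algebra.smul_def, ← map_mul, hcL, map_one]
  · rw [smul_mul_assoc, mul_smul_comm, smul_smul, ← Finset.prod_mul_distrib]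
    have hprod : (∏ i : Fin r, xEl G (σ i) (σ' i) * xEl G (σ i) (σ' i))
        = (4 : MonoidAlgebra ℂ G ⊗[ℂ] MonoidAlgebra ℂ G) ^ r := by
      rw [Finset.prod_congr rfl fun i _ => xEl_sq (hσ i) (hσ' i), Finset.prod_const,
        Finset.card_univ, Fintype.card_fin]
    rw [hprod]
    have h4 : ((4 : MonoidAlgebra ℂ G ⊗[ℂ] MonoidAlgebra ℂ G)) ^ r
        = algebraMap ℂ _ ((4:ℂ) ^ r) := by rw [map_pow, map_ofNat]
    rw [h4, Algebra.algebraMap_eq_smul_one, smul_smul, hscal, one_smul,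
      Algebra.TensorProduct.one_def]
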